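/- arXiv:1309.5996 — 2 statements merged into one kernel-verified Lean document; each statement's English description precedes it below -/
import Mathlib

section
/- Let f, g : S → E be strictly increasing functions from a set S of epsilon numbers into the epsilon numbers. Then f(e) ≤ g(e) for all e ∈ S if and only if for every ordinal x with Ep(x) ⊆ S one has x[f] ≤ x[g]. -/
open Ordinal

/-- An ordinal is an epsilon number if it is a fixed point of `ω ^ ·`. -/
def IsEpsilon (x : Ordinal.{0}) : Prop := ω ^ x = x

theorem cnf_fst_lt {x : Ordinal.{0}} (h : ¬ ω ^ x = x) {p : Ordinal × Ordinal}
    (hp : p ∈ CNF ω x) : p.1 < x := by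
  have hx : x ≠ 0 := by
    rintro rfl
    simp [Ordinal.CNF.zero_right] at hp
  have h1 : p.1 ≤ Ordinal.log ω x := Ordinal.CNF.fst_le_log hp
  have h2 : Ordinal.log ω x < x := by
    rcases lt_or_eq_of_le (Ordinal.log_le_self ω x) with h' | h'
    · exact h'
    · exfalso
      have hle := Ordinal.opow_log_le_self ω hx
      rw [h'] at hle
      exact h (le_antisymm hle (Ordinal.right_le_opow x one_lt_omega0))
  exact lt_of_le_of_lt h1 h2

open scoped Classical in
/-- The set of epsilon numbers occurring hereditarily in the Cantor normal form of `x`. -/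
noncomputable def Ep (x : Ordinal.{0}) : Set Ordinal.{0} :=
  if h : ω ^ x = x then {x}
  else ⋃ p : {q // q ∈ CNF ω x}, Ep p.1.1
termination_by x
decreasing_by exact cnf_fst_lt h p.2

open scoped Classical in
/-- Simultaneous substitution of the epsilon numbers occurring hereditarily in the
Cantor normal form of `x` by their values under `f`. -/
noncomputable def subst (f : Ordinal.{0} → Ordinal.{0}) (x : Ordinal.{0}) : Ordinal.{0} :=
  if h : ω ^ x = x then f x
  else (((CNF ω x).attach).map (fun p => ω ^ subst f p.1.1 * p.1.2)).sum
termination_by x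
decreasing_by exact cnf_fst_lt h p.2

theorem Ep_of_eps {x : Ordinal.{0}} (h : ω ^ x = x) : Ep x = {x} := by
  rw [Ep, dif_pos h]

theorem subst_of_eps (f : Ordinal.{0} → Ordinal.{0}) {x : Ordinal.{0}} (h : ω ^ x = x) :
    subst f x = f x := by
  rw [subst, dif_pos h]

theorem sum_le_sum_list {α : Type*} {l : List α} {f g : α → Ordinal.{0}}
    (h : ∀ a ∈ l, f a ≤ g a) : (l.map f).sum ≤ (l.map g).sum := by
  induction l with
  | nil => simp
  | cons a l ih =>
    simp only [List.map_cons, List.sum_cons]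
    exact add_le_add (h a (by simp)) (ih fun a ha => h a (by simp [ha]))

theorem subst_le_subst {f g : Ordinal.{0} → Ordinal.{0}} {S : Set Ordinal.{0}}
    (hfg : ∀ e ∈ S, f e ≤ g e) :
    ∀ x : Ordinal.{0}, Ep x ⊆ S → subst f x ≤ subst g x := by
  intro x
  induction x using Ordinal.induction with
  | h x IH =>
    intro hx
    by_cases h : ω ^ x = x
    · rw [subst_of_eps f h, subst_of_eps g h]
      apply hfg
      rw [Ep_of_eps h] at hx
      exact hx rfl
    · rw [subst, dif_neg h, subst, dif_neg h]
      apply sum_le_sum_list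
      intro p _
      have hlt : p.1.1 < x := cnf_fst_lt h p.2
      have hsub : Ep p.1.1 ⊆ S := by
        intro y hy
        apply hx
        rw [Ep, dif_neg h]
        exact Set.mem_iUnion.2 ⟨p, hy⟩
      exact mul_le_mul_left
        (Ordinal.opow_le_opow_right omega0_pos (IH _ hlt hsub)) _

theorem stmt6 (S : Set Ordinal.{0}) (f g : Ordinal → Ordinal)
    (hS : ∀ e ∈ S, IsEpsilon e)
    (hfE : ∀ e ∈ S, IsEpsilon (f e)) (hgE : ∀ e ∈ S, IsEpsilon (g e))
    (hf : StrictMonoOn f S) (hg : StrictMonoOn g S) :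
    (∀ e ∈ S, f e ≤ g e) ↔
      (∀ x : Ordinal, Ep x ⊆ S → subst f x ≤ subst g x) := by
  constructor
  · intro h x hx
    exact subst_le_subst h x hx
  · intro h e he
    have heps := hS e he
    have := h e (by rw [Ep_of_eps heps]; exact Set.singleton_subset_iff.2 he)
    rwa [subst_of_eps f heps, subst_of_eps g heps] at this
end

section
/- Let f : S → E be a strictly increasing function from a set S of epsilon numbers into the epsilon numbers, and let x, y be ordinals with Ep(x) ∪ Ep(y) ⊆ S. Then Ep(x + y) ⊆ S and (x + y)[f] = x[f] + y[f]. -/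
open Ordinal

theorem eps_ne_zero {e : Ordinal.{0}} (he : ω ^ e = e) : e ≠ 0 := by
  rintro rfl; simp at he

theorem log_omega_eps {e : Ordinal.{0}} (he : ω ^ e = e) : Ordinal.log ω e = e := by
  conv_lhs => rw [← he]
  exact Ordinal.log_opow one_lt_omega0 e

theorem CNF_eps {e : Ordinal.{0}} (he : ω ^ e = e) : CNF ω e = [(e, 1)] := by
  rw [Ordinal.CNF.ne_zero (eps_ne_zero he), log_omega_eps he, he,
    Ordinal.div_self (eps_ne_zero he), Ordinal.mod_self, Ordinal.CNF.zero_right]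

theorem Ep_eps {e : Ordinal.{0}} (he : ω ^ e = e) : Ep e = {e} := by
  rw [Ep, dif_pos he]

theorem Ep_zero : Ep 0 = (∅ : Set Ordinal) := by
  rw [Ep, dif_neg (by simp)]
  simp

theorem subst_eps (f : Ordinal → Ordinal) {e : Ordinal.{0}} (he : ω ^ e = e) :
    subst f e = f e := by
  rw [subst, dif_pos he]

theorem log_lt_self_of {x : Ordinal.{0}} (h : ¬ ω ^ x = x) (hx : x ≠ 0) :
    Ordinal.log ω x < x := by
  rcases lt_or_eq_of_le (Ordinal.log_le_self ω x) with h' | h'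
  · exact h'
  · exfalso
    have hle := Ordinal.opow_log_le_self ω hx
    rw [h'] at hle
    exact h (le_antisymm hle (Ordinal.right_le_opow x one_lt_omega0))

theorem Ep_iUnion (x : Ordinal.{0}) : Ep x = ⋃ p ∈ CNF ω x, Ep p.1 := by
  by_cases h : ω ^ x = x
  · rw [Ep_eps h, CNF_eps h]
    ext a; simp [Ep_eps h]
  · rw [Ep, dif_neg h, Set.iUnion_subtype]

theorem subst_eq_sum (f : Ordinal → Ordinal) {x : Ordinal.{0}} (h : ¬ ω ^ x = x) :
    subst f x = ((CNF ω x).map (fun p => ω ^ subst f p.1 * p.2)).sum := by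
  rw [subst, dif_neg h]
  congr 1
  exact List.attach_map_val (l := CNF ω x) (f := fun p => ω ^ subst f p.1 * p.2)

theorem subst_zero (f : Ordinal → Ordinal) : subst f 0 = 0 := by
  rw [subst_eq_sum f (by simp), Ordinal.CNF.zero_right]
  simp

theorem Ep_decomp {x : Ordinal.{0}} (hx : x ≠ 0) :
    Ep x = Ep (Ordinal.log ω x) ∪ Ep (x % ω ^ Ordinal.log ω x) := by
  by_cases h : ω ^ x = x
  · rw [log_omega_eps h, h, Ordinal.mod_self, Ep_zero, Set.union_empty]
  · rw [Ep_iUnion x, Ordinal.CNF.ne_zero hx, Ep_iUnion (x % ω ^ Ordinal.log ω x)]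
    ext a
    simp only [List.mem_cons, Set.mem_iUnion, Set.mem_union]
    constructor
    · rintro ⟨p, (rfl | hp), ha⟩
      · exact Or.inl ha
      · exact Or.inr ⟨p, hp, ha⟩
    · rintro (ha | ⟨p, hp, ha⟩)
      · exact ⟨_, Or.inl rfl, ha⟩
      · exact ⟨p, Or.inr hp, ha⟩

theorem subst_eq (f : Ordinal → Ordinal) {x : Ordinal.{0}}
    (hE : ∀ e ∈ Ep x, IsEpsilon (f e)) (hx : x ≠ 0) :
    subst f x = ω ^ subst f (Ordinal.log ω x) * (x / ω ^ Ordinal.log ω x)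
      + subst f (x % ω ^ Ordinal.log ω x) := by
  by_cases h : ω ^ x = x
  · rw [log_omega_eps h, subst_eps f h, h, Ordinal.div_self (eps_ne_zero h),
      Ordinal.mod_self, subst_zero, mul_one, add_zero]
    exact (hE x (by rw [Ep_eps h]; rfl)).symm
  · rw [subst_eq_sum f h, Ordinal.CNF.ne_zero hx, List.map_cons, List.sum_cons]
    congr 1
    set m := x % ω ^ Ordinal.log ω x with hm
    by_cases hm0 : m = 0
    · rw [hm0, Ordinal.CNF.zero_right, subst_zero]; simp
    · by_cases hme : ω ^ m = m
      · have hfm : IsEpsilon (f m) :=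
          hE m (by rw [Ep_decomp hx]; right; rw [Ep_eps hme]; rfl)
        rw [CNF_eps hme, subst_eps f hme]
        simp only [List.map_cons, List.map_nil, List.sum_cons, List.sum_nil,
          mul_one, add_zero]
        rw [subst_eps f hme]
        exact hfm
      · rw [subst_eq_sum f hme]

theorem Ep_log_subset {x : Ordinal.{0}} (hx : x ≠ 0) : Ep (Ordinal.log ω x) ⊆ Ep x := by
  rw [Ep_decomp hx]; exact Set.subset_union_left

theorem Ep_mod_subset {x : Ordinal.{0}} (hx : x ≠ 0) :
    Ep (x % ω ^ Ordinal.log ω x) ⊆ Ep x := by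
  rw [Ep_decomp hx]; exact Set.subset_union_right

theorem subst_pos (f : Ordinal → Ordinal) {x : Ordinal.{0}}
    (hE : ∀ e ∈ Ep x, IsEpsilon (f e)) (hx : x ≠ 0) : 0 < subst f x := by
  rw [subst_eq f hE hx]
  have h1 : 0 < ω ^ subst f (Ordinal.log ω x) * (x / ω ^ Ordinal.log ω x) :=
    mul_pos (Ordinal.opow_pos _ omega0_pos) (Ordinal.div_opow_log_pos ω hx)
  exact h1.trans_le (le_self_add)

theorem succ_le_of_lt' {a b : Ordinal} (h : a < b) : a + 1 ≤ b := by
  rw [Ordinal.add_one_eq_succ]; exact Order.succ_le_iff.2 h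

/-- subst maps ordinals below `ω ^ z` for `z` epsilon strictly below `f z`. -/
theorem subst_lt_eps (S : Set Ordinal.{0}) (f : Ordinal → Ordinal)
    (hfE : ∀ e ∈ S, IsEpsilon (f e)) (hf : StrictMonoOn f S)
    {z : Ordinal.{0}} (hze : ω ^ z = z) (hzS : z ∈ S) :
    ∀ x, x < z → Ep x ⊆ S → subst f x < f z := by
  intro x
  induction x using Ordinal.induction with
  | h x IH =>
  intro hxz hxS
  have hfz : ω ^ f z = f z := hfE z hzS
  by_cases hx0 : x = 0
  · rw [hx0, subst_zero, ← hfz]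
    exact Ordinal.opow_pos _ omega0_pos
  by_cases hxe : ω ^ x = x
  · rw [subst_eps f hxe]
    exact hf (hxS (by rw [Ep_eps hxe]; rfl)) hzS hxz
  · have hA : Ordinal.log ω x < x := log_lt_self_of hxe hx0
    have hm : x % ω ^ Ordinal.log ω x < x := Ordinal.mod_opow_log_lt_self ω hx0
    have h1 : subst f (Ordinal.log ω x) < f z :=
      IH _ hA (hA.trans hxz) ((Ep_log_subset hx0).trans hxS)
    have h2 : subst f (x % ω ^ Ordinal.log ω x) < f z :=
      IH _ hm (hm.trans hxz) ((Ep_mod_subset hx0).trans hxS)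
    rw [subst_eq f (fun e he => hfE e (hxS he)) hx0]
    have hc : x / ω ^ Ordinal.log ω x < ω := Ordinal.div_opow_log_lt x one_lt_omega0
    have k1 : ω ^ subst f (Ordinal.log ω x) * (x / ω ^ Ordinal.log ω x) < ω ^ f z := by
      calc ω ^ subst f (Ordinal.log ω x) * (x / ω ^ Ordinal.log ω x)
          < ω ^ subst f (Ordinal.log ω x) * ω :=
            mul_lt_mul_of_pos_left hc (Ordinal.opow_pos _ omega0_pos)
        _ = ω ^ (subst f (Ordinal.log ω x) + 1) := by rw [opow_add, opow_one]
        _ ≤ ω ^ f z := Ordinal.opow_le_opow_right omega0_pos (succ_le_of_lt' h1)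
    have k2 : subst f (x % ω ^ Ordinal.log ω x) < ω ^ f z := by rw [hfz]; exact h2
    have := (Ordinal.principal_add_omega0_opow (f z)) k1 k2
    rwa [hfz] at this

theorem lt_opow_helper (S : Set Ordinal.{0}) (f : Ordinal → Ordinal) {m A : Ordinal.{0}}
    (hQ : Ep m ⊆ S → m ≠ 0 → subst f m < ω ^ (subst f (Ordinal.log ω m) + 1))
    (hR : ∀ x < A, Ep x ⊆ S → Ep A ⊆ S → subst f x < subst f A)
    (hmS : Ep m ⊆ S) (hAS : Ep A ⊆ S) (h : m < ω ^ A) : subst f m < ω ^ subst f A := by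
  by_cases hm0 : m = 0
  · rw [hm0, subst_zero]
    exact Ordinal.opow_pos _ omega0_pos
  · have hlog : Ordinal.log ω m < A := (Ordinal.lt_opow_iff_log_lt one_lt_omega0 hm0).1 h
    have h2 : subst f (Ordinal.log ω m) < subst f A :=
      hR _ hlog ((Ep_log_subset hm0).trans hmS) hAS
    exact (hQ hmS hm0).trans_le
      (Ordinal.opow_le_opow_right omega0_pos (succ_le_of_lt' h2))

theorem key (S : Set Ordinal.{0}) (f : Ordinal → Ordinal)
    (hfE : ∀ e ∈ S, IsEpsilon (f e)) (hf : StrictMonoOn f S) :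
    ∀ z : Ordinal.{0},
      (Ep z ⊆ S → z ≠ 0 → subst f z < ω ^ (subst f (Ordinal.log ω z) + 1)) ∧
      (∀ x < z, Ep x ⊆ S → Ep z ⊆ S → subst f x < subst f z) := by
  intro z
  induction z using Ordinal.induction with
  | h z IH =>
  constructor
  · -- Q part
    intro hzS hz0
    by_cases hze : ω ^ z = z
    · rw [log_omega_eps hze, subst_eps f hze]
      have hfz : ω ^ f z = f z := hfE z (hzS (by rw [Ep_eps hze]; rfl))
      calc f z = ω ^ f z := hfz.symm
        _ < ω ^ (f z + 1) := (Ordinal.opow_lt_opow_iff_right one_lt_omega0).2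
            (by rw [Ordinal.add_one_eq_succ]; exact Order.lt_succ _)
    · have hE : Ordinal.log ω z < z := log_lt_self_of hze hz0
      have hm : z % ω ^ Ordinal.log ω z < z := Ordinal.mod_opow_log_lt_self ω hz0
      have hmlt : subst f (z % ω ^ Ordinal.log ω z) < ω ^ subst f (Ordinal.log ω z) :=
        lt_opow_helper S f (IH _ hm).1 (IH _ hE).2 ((Ep_mod_subset hz0).trans hzS)
          ((Ep_log_subset hz0).trans hzS)
          (Ordinal.mod_lt z (Ordinal.opow_ne_zero _ omega0_ne_zero))
      rw [subst_eq f (fun e he => hfE e (hzS he)) hz0]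
      have hd : z / ω ^ Ordinal.log ω z < ω := Ordinal.div_opow_log_lt z one_lt_omega0
      calc ω ^ subst f (Ordinal.log ω z) * (z / ω ^ Ordinal.log ω z)
            + subst f (z % ω ^ Ordinal.log ω z)
          < ω ^ subst f (Ordinal.log ω z) * (z / ω ^ Ordinal.log ω z)
            + ω ^ subst f (Ordinal.log ω z) := add_lt_add_right hmlt _
        _ = ω ^ subst f (Ordinal.log ω z) * (z / ω ^ Ordinal.log ω z + 1) := by
            rw [mul_add_one]
        _ ≤ ω ^ subst f (Ordinal.log ω z) * ω := mul_le_mul_right (succ_le_of_lt' hd) _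
        _ = ω ^ (subst f (Ordinal.log ω z) + 1) := by rw [opow_add, opow_one]
  · -- R part
    intro x hxz hxS hzS
    have hz0 : z ≠ 0 := fun h => by subst h; exact not_lt_zero hxz
    by_cases hx0 : x = 0
    · rw [hx0, subst_zero]
      exact subst_pos f (fun e he => hfE e (hzS he)) hz0
    by_cases hze : ω ^ z = z
    · rw [subst_eps f hze]
      exact subst_lt_eps S f hfE hf hze (hzS (by rw [Ep_eps hze]; rfl)) x hxz hxS
    · have hE : Ordinal.log ω z < z := log_lt_self_of hze hz0
      have hm' : z % ω ^ Ordinal.log ω z < z := Ordinal.mod_opow_log_lt_self ω hz0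
      have hAE : Ordinal.log ω x ≤ Ordinal.log ω z := Ordinal.log_mono_right ω hxz.le
      have hES : Ep (Ordinal.log ω z) ⊆ S := (Ep_log_subset hz0).trans hzS
      have hm'S : Ep (z % ω ^ Ordinal.log ω z) ⊆ S := (Ep_mod_subset hz0).trans hzS
      rw [subst_eq f (fun e he => hfE e (hzS he)) hz0]
      rcases lt_or_eq_of_le hAE with hlt | heq
      · have h1 : subst f x < ω ^ (subst f (Ordinal.log ω x) + 1) := (IH x hxz).1 hxS hx0
        have h2 : subst f (Ordinal.log ω x) < subst f (Ordinal.log ω z) :=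
          (IH _ hE).2 _ hlt ((Ep_log_subset hx0).trans hxS) hES
        have h3 : ω ^ (subst f (Ordinal.log ω x) + 1) ≤ ω ^ subst f (Ordinal.log ω z) :=
          Ordinal.opow_le_opow_right omega0_pos (succ_le_of_lt' h2)
        have h4 : (1 : Ordinal) ≤ z / ω ^ Ordinal.log ω z :=
          Order.one_le_iff_pos.2 (Ordinal.div_opow_log_pos ω hz0)
        calc subst f x < ω ^ (subst f (Ordinal.log ω x) + 1) := h1
          _ ≤ ω ^ subst f (Ordinal.log ω z) := h3
          _ = ω ^ subst f (Ordinal.log ω z) * 1 := (mul_one _).symm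
          _ ≤ ω ^ subst f (Ordinal.log ω z) * (z / ω ^ Ordinal.log ω z) :=
              mul_le_mul_right h4 _
          _ ≤ _ := le_self_add
      · rw [subst_eq f (fun e he => hfE e (hxS he)) hx0, heq]
        have hmx : x % ω ^ Ordinal.log ω z < x := by
          rw [← heq]; exact Ordinal.mod_opow_log_lt_self ω hx0
        have hmxS : Ep (x % ω ^ Ordinal.log ω z) ⊆ S := by
          rw [← heq]; exact (Ep_mod_subset hx0).trans hxS
        have hcd : x / ω ^ Ordinal.log ω z ≤ z / ω ^ Ordinal.log ω z :=
          Ordinal.div_le_left hxz.le _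
        rcases lt_or_eq_of_le hcd with hc | hc
        · have hAz : Ordinal.log ω z < z := hE
          have hmlt : subst f (x % ω ^ Ordinal.log ω z) < ω ^ subst f (Ordinal.log ω z) :=
            lt_opow_helper S f (IH _ (hmx.trans hxz)).1 (IH _ hAz).2 hmxS hES
              (Ordinal.mod_lt x (Ordinal.opow_ne_zero _ omega0_ne_zero))
          calc ω ^ subst f (Ordinal.log ω z) * (x / ω ^ Ordinal.log ω z)
                + subst f (x % ω ^ Ordinal.log ω z)
              < ω ^ subst f (Ordinal.log ω z) * (x / ω ^ Ordinal.log ω z)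
                + ω ^ subst f (Ordinal.log ω z) := add_lt_add_right hmlt _
            _ = ω ^ subst f (Ordinal.log ω z) * (x / ω ^ Ordinal.log ω z + 1) := by
                rw [mul_add_one]
            _ ≤ ω ^ subst f (Ordinal.log ω z) * (z / ω ^ Ordinal.log ω z) :=
                mul_le_mul_right (succ_le_of_lt' hc) _
            _ ≤ _ := le_self_add
        · have hmm : x % ω ^ Ordinal.log ω z < z % ω ^ Ordinal.log ω z := by
            have hxz' : ω ^ Ordinal.log ω z * (z / ω ^ Ordinal.log ω z)
                  + x % ω ^ Ordinal.log ω z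
                < ω ^ Ordinal.log ω z * (z / ω ^ Ordinal.log ω z)
                  + z % ω ^ Ordinal.log ω z := by
              calc ω ^ Ordinal.log ω z * (z / ω ^ Ordinal.log ω z)
                    + x % ω ^ Ordinal.log ω z
                  = x := by rw [← hc]; exact Ordinal.div_add_mod x _
                _ < z := hxz
                _ = _ := (Ordinal.div_add_mod z _).symm
            exact (add_lt_add_iff_left _).1 hxz'
          rw [hc]
          exact add_lt_add_right ((IH _ hm').2 _ hmm hmxS hm'S) _

theorem subst_lt_opow (S : Set Ordinal.{0}) (f : Ordinal → Ordinal)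
    (hfE : ∀ e ∈ S, IsEpsilon (f e)) (hf : StrictMonoOn f S) {m A : Ordinal.{0}}
    (hmS : Ep m ⊆ S) (hAS : Ep A ⊆ S) (h : m < ω ^ A) : subst f m < ω ^ subst f A :=
  lt_opow_helper S f (key S f hfE hf m).1 (key S f hfE hf A).2 hmS hAS h

theorem le_mul_self' {a d : Ordinal} (hd : 0 < d) : a ≤ a * d := by
  calc a = a * 1 := (mul_one a).symm
    _ ≤ a * d := mul_le_mul_right (Order.one_le_iff_pos.2 hd) a

theorem cnf_head {a c r : Ordinal.{0}} (hc0 : 0 < c) (hcw : c < ω) (hr : r < ω ^ a) :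
    Ordinal.log ω (ω ^ a * c + r) = a ∧ (ω ^ a * c + r) / ω ^ a = c ∧
      (ω ^ a * c + r) % ω ^ a = r := by
  have hpos : 0 < ω ^ a * c + r :=
    lt_of_lt_of_le (mul_pos (Ordinal.opow_pos _ omega0_pos) hc0)
      (le_self_add)
  have hu0 : ω ^ a * c + r ≠ 0 := hpos.ne'
  have h1 : ω ^ a ≤ ω ^ a * c + r := (le_mul_self' hc0).trans (le_self_add)
  have h2 : ω ^ a * c + r < ω ^ (a + 1) := by
    calc ω ^ a * c + r < ω ^ a * c + ω ^ a := add_lt_add_right hr _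
      _ = ω ^ a * (c + 1) := by rw [mul_add_one]
      _ ≤ ω ^ a * ω := mul_le_mul_right (succ_le_of_lt' hcw) _
      _ = ω ^ (a + 1) := by rw [opow_add, opow_one]
  have hlog : Ordinal.log ω (ω ^ a * c + r) = a := by
    apply le_antisymm
    · have := (Ordinal.lt_opow_iff_log_lt one_lt_omega0 hu0).1 h2
      rwa [Ordinal.add_one_eq_succ, Order.lt_succ_iff] at this
    · exact (Ordinal.opow_le_iff_le_log one_lt_omega0 hu0).1 h1
  have hdiv : (ω ^ a * c + r) / ω ^ a = c := by
    rw [Ordinal.mul_add_div c (Ordinal.opow_ne_zero a omega0_ne_zero) r,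
      Ordinal.div_eq_zero_of_lt hr, add_zero]
  refine ⟨hlog, hdiv, ?_⟩
  have := Ordinal.div_add_mod (ω ^ a * c + r) (ω ^ a)
  rw [hdiv] at this
  exact add_left_cancel this

theorem main (S : Set Ordinal.{0}) (f : Ordinal → Ordinal)
    (hfE : ∀ e ∈ S, IsEpsilon (f e)) (hf : StrictMonoOn f S) :
    ∀ x y : Ordinal.{0}, Ep x ⊆ S → Ep y ⊆ S →
      Ep (x + y) ⊆ S ∧ subst f (x + y) = subst f x + subst f y := by
  intro x
  induction x using Ordinal.induction with
  | h x IH =>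
  intro y hx hy
  by_cases hx0 : x = 0
  · rw [hx0, zero_add, subst_zero, zero_add]; exact ⟨hy, rfl⟩
  by_cases hy0 : y = 0
  · rw [hy0, add_zero, subst_zero, add_zero]; exact ⟨hx, rfl⟩
  have hEx : ∀ e ∈ Ep x, IsEpsilon (f e) := fun e he => hfE e (hx he)
  have hEy : ∀ e ∈ Ep y, IsEpsilon (f e) := fun e he => hfE e (hy he)
  rcases lt_or_ge (Ordinal.log ω x) (Ordinal.log ω y) with hae | hea
  · -- log x < log y : absorption
    have hxy : x + y = y := Ordinal.add_absorp
      ((Ordinal.lt_opow_iff_log_lt one_lt_omega0 hx0).2 hae)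
      (Ordinal.opow_log_le_self ω hy0)
    have hsub : subst f x + subst f y = subst f y := by
      apply Ordinal.add_absorp (b := subst f (Ordinal.log ω y))
      · exact subst_lt_opow S f hfE hf hx ((Ep_log_subset hy0).trans hy)
          ((Ordinal.lt_opow_iff_log_lt one_lt_omega0 hx0).2 hae)
      · rw [subst_eq f hEy hy0]
        exact (le_mul_self' (Ordinal.div_opow_log_pos ω hy0)).trans
          (le_self_add)
    rw [hxy, hsub]; exact ⟨hy, rfl⟩
  · have hm : x % ω ^ Ordinal.log ω x < x := Ordinal.mod_opow_log_lt_self ω hx0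
    have hmS : Ep (x % ω ^ Ordinal.log ω x) ⊆ S := (Ep_mod_subset hx0).trans hx
    have haS : Ep (Ordinal.log ω x) ⊆ S := (Ep_log_subset hx0).trans hx
    have hxd : ω ^ Ordinal.log ω x * (x / ω ^ Ordinal.log ω x)
        + x % ω ^ Ordinal.log ω x = x := Ordinal.div_add_mod x _
    have hc0 : 0 < x / ω ^ Ordinal.log ω x := Ordinal.div_opow_log_pos ω hx0
    have hcw : x / ω ^ Ordinal.log ω x < ω := Ordinal.div_opow_log_lt x one_lt_omega0
    have hmlt : x % ω ^ Ordinal.log ω x < ω ^ Ordinal.log ω x :=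
      Ordinal.mod_lt x (Ordinal.opow_ne_zero _ omega0_ne_zero)
    have hu0 : x + y ≠ 0 := by
      intro h
      exact hx0 (le_antisymm (h ▸ (le_self_add : x ≤ x + y)) (zero_le (a := x)))
    rcases lt_or_eq_of_le hea with he | he
    · -- log y < log x
      obtain ⟨hrS, hreq⟩ := IH _ hm y hmS hy
      have hylt : y < ω ^ Ordinal.log ω x :=
        (Ordinal.lt_opow_iff_log_lt one_lt_omega0 hy0).2 he
      have hrlt : x % ω ^ Ordinal.log ω x + y < ω ^ Ordinal.log ω x :=
        (Ordinal.principal_add_omega0_opow _) hmlt hylt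
      have hxy : x + y = ω ^ Ordinal.log ω x * (x / ω ^ Ordinal.log ω x)
          + (x % ω ^ Ordinal.log ω x + y) := by
        rw [← add_assoc, hxd]
      obtain ⟨hl, hd, hmm⟩ := cnf_head hc0 hcw hrlt
      have hEp : Ep (x + y) ⊆ S := by
        rw [Ep_decomp hu0, hxy, hl, hmm]
        exact Set.union_subset haS hrS
      refine ⟨hEp, ?_⟩
      rw [subst_eq f (fun e he' => hfE e (hEp he')) hu0, hxy, hl, hd, hmm, hreq,
        subst_eq f hEx hx0, add_assoc]
    · -- log y = log x
      have hd0 : 0 < y / ω ^ Ordinal.log ω y := Ordinal.div_opow_log_pos ω hy0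
      have hdw : y / ω ^ Ordinal.log ω y < ω := Ordinal.div_opow_log_lt y one_lt_omega0
      have hyd : ω ^ Ordinal.log ω y * (y / ω ^ Ordinal.log ω y)
          + y % ω ^ Ordinal.log ω y = y := Ordinal.div_add_mod y _
      rw [he] at hd0 hdw hyd
      have hm'lt : y % ω ^ Ordinal.log ω x < ω ^ Ordinal.log ω x := by
        rw [← he]; exact Ordinal.mod_lt y (Ordinal.opow_ne_zero _ omega0_ne_zero)
      have hm'S : Ep (y % ω ^ Ordinal.log ω x) ⊆ S := by
        rw [← he]; exact (Ep_mod_subset hy0).trans hy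
      have habs : x % ω ^ Ordinal.log ω x
          + ω ^ Ordinal.log ω x * (y / ω ^ Ordinal.log ω x)
          = ω ^ Ordinal.log ω x * (y / ω ^ Ordinal.log ω x) :=
        Ordinal.add_absorp hmlt (le_mul_self' hd0)
      have hxy : x + y = ω ^ Ordinal.log ω x
          * (x / ω ^ Ordinal.log ω x + y / ω ^ Ordinal.log ω x)
          + y % ω ^ Ordinal.log ω x := by
        rw [mul_add]
        calc x + y = ω ^ Ordinal.log ω x * (x / ω ^ Ordinal.log ω x)
              + x % ω ^ Ordinal.log ω x
              + (ω ^ Ordinal.log ω x * (y / ω ^ Ordinal.log ω x)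
              + y % ω ^ Ordinal.log ω x) := by rw [hxd, hyd]
          _ = ω ^ Ordinal.log ω x * (x / ω ^ Ordinal.log ω x)
              + (x % ω ^ Ordinal.log ω x
              + ω ^ Ordinal.log ω x * (y / ω ^ Ordinal.log ω x))
              + y % ω ^ Ordinal.log ω x := by rw [add_assoc, add_assoc, add_assoc]
          _ = _ := by rw [habs, add_assoc]
      have hsum : x / ω ^ Ordinal.log ω x + y / ω ^ Ordinal.log ω x < ω :=
        Ordinal.principal_add_omega0 hcw hdw
      obtain ⟨hl, hd, hmm⟩ := cnf_head (hc0.trans_le (le_self_add)) hsum hm'lt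
      have hEp : Ep (x + y) ⊆ S := by
        rw [Ep_decomp hu0, hxy, hl, hmm]
        exact Set.union_subset haS hm'S
      refine ⟨hEp, ?_⟩
      have habs2 : subst f (x % ω ^ Ordinal.log ω x)
          + ω ^ subst f (Ordinal.log ω x) * (y / ω ^ Ordinal.log ω x)
          = ω ^ subst f (Ordinal.log ω x) * (y / ω ^ Ordinal.log ω x) :=
        Ordinal.add_absorp (subst_lt_opow S f hfE hf hmS haS hmlt) (le_mul_self' hd0)
      rw [subst_eq f (fun e he' => hfE e (hEp he')) hu0, hxy, hl, hd, hmm,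
        subst_eq f hEx hx0, subst_eq f hEy hy0, he, mul_add]
      rw [add_assoc, add_assoc, ← add_assoc (subst f (x % ω ^ Ordinal.log ω x)), habs2]

theorem stmt8 (S : Set Ordinal.{0}) (f : Ordinal → Ordinal)
    (hS : ∀ e ∈ S, IsEpsilon e) (hfE : ∀ e ∈ S, IsEpsilon (f e))
    (hf : StrictMonoOn f S)
    (x y : Ordinal) (hx : Ep x ⊆ S) (hy : Ep y ⊆ S) :
    Ep (x + y) ⊆ S ∧ subst f (x + y) = subst f x + subst f y :=
  main S f hfE hf x y hx hy
end
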